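/- Let X be a reflexive Banach space with property (m_p), p > 1, and T a bounded operator on X. Define β(T) as the supremum of ‖x‖ over all weak cluster points of maximizing sequences for T. Then β(T) > 0 implies β(T) = 1, and β(T) = 1 if and only if T attains its norm. -/

import Mathlib

open Filter Topology

/-- Weak convergence of a sequence in a normed space. -/
def WeakTendsto {X : Type*} [NormedAddCommGroup X] [NormedSpace ℝ X]
    (x : ℕ → X) (x₀ : X) : Prop :=
  ∀ f : X →L[ℝ] ℝ, Tendsto (fun n => f (x n)) atTop (𝓝 (f x₀))

/-- Property (m_p). -/
def PropertyMp {X : Type*} [NormedAddCommGroup X] [NormedSpace ℝ X] (p : ℝ) : Prop :=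
  ∀ x : ℕ → X, WeakTendsto x 0 → ∀ y : X,
    limsup (fun n => ‖x n + y‖ ^ p) atTop = limsup (fun n => ‖x n‖ ^ p) atTop + ‖y‖ ^ p

/-- A maximizing sequence for a bounded operator: unit vectors with ‖T xₙ‖ → ‖T‖. -/
def MaximizingSeq {X : Type*} [NormedAddCommGroup X] [NormedSpace ℝ X]
    (T : X →L[ℝ] X) (x : ℕ → X) : Prop :=
  (∀ n, ‖x n‖ = 1) ∧ Tendsto (fun n => ‖T (x n)‖) atTop (𝓝 ‖T‖)

/-- Weak cluster point of some maximizing sequence for T. -/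
def WeakClusterPtOfMaximizing {X : Type*} [NormedAddCommGroup X] [NormedSpace ℝ X]
    (T : X →L[ℝ] X) (x₀ : X) : Prop :=
  ∃ x : ℕ → X, MaximizingSeq T x ∧ ∃ φ : ℕ → ℕ, StrictMono φ ∧ WeakTendsto (x ∘ φ) x₀

/-- The essential norm: distance to the compact operators. -/
noncomputable def essNorm {X : Type*} [NormedAddCommGroup X] [NormedSpace ℝ X]
    (T : X →L[ℝ] X) : ℝ :=
  sInf {c : ℝ | ∃ K : X →L[ℝ] X, IsCompactOperator K ∧ c = ‖T - K‖}

/-- Maximal weak maximizing limit. -/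
noncomputable def betaT {X : Type*} [NormedAddCommGroup X] [NormedSpace ℝ X]
    (T : X →L[ℝ] X) : ℝ :=
  sSup {r : ℝ | ∃ x₀ : X, WeakClusterPtOfMaximizing T x₀ ∧ r = ‖x₀‖}

section Aux
variable {X : Type*} [NormedAddCommGroup X] [NormedSpace ℝ X] [CompleteSpace X]

/-- Weak cluster points of unit-norm maximizing sequences have norm ≤ 1. -/
lemma norm_le_one_of_wcp {T : X →L[ℝ] X} {x₀ : X}
    (h : WeakClusterPtOfMaximizing T x₀) : ‖x₀‖ ≤ 1 := by
  obtain ⟨x, hmax, φ, hφ, hwt⟩ := h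
  rcases eq_or_ne x₀ 0 with h0 | h0
  · simp [h0]
  obtain ⟨g, hg1, hgx⟩ := exists_dual_vector ℝ x₀ (norm_ne_zero_iff.mpr h0)
  have := hwt g
  rw [hgx] at this
  refine le_of_tendsto this (Eventually.of_forall fun n => ?_)
  calc g ((x ∘ φ) n) ≤ ‖g ((x ∘ φ) n)‖ := le_abs_self _
    _ ≤ ‖g‖ * ‖(x ∘ φ) n‖ := g.le_opNorm _
    _ = 1 := by simp [hg1, hmax.1 (φ n)]

/-- Key lemma: nonzero weak cluster point implies norm attainment. -/
lemma attains_of_wcp_ne_zero {p : ℝ} (hp : 1 < p) (hmp : PropertyMp (X := X) p)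
    {T : X →L[ℝ] X} {x₀ : X} (h : WeakClusterPtOfMaximizing T x₀) (h0 : x₀ ≠ 0) :
    ∃ x : X, ‖x‖ = 1 ∧ ‖T x‖ = ‖T‖ := by
  have hp0 : (0:ℝ) < p := by linarith
  obtain ⟨x, hmax, φ, hφ, hwt⟩ := h
  set y : ℕ → X := fun n => x (φ n) - x₀ with hy
  have hwy : WeakTendsto y 0 := by
    intro f
    have := (hwt f).sub (tendsto_const_nhds (x := f x₀))
    simpa [y, map_sub] using this
  have hwTy : WeakTendsto (fun n => T (y n)) 0 := by
    intro f
    have := hwy (f.comp T)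
    simpa using this
  -- first application of (m_p)
  have E1 := hmp y hwy x₀
  have hx1 : (fun n => ‖y n + x₀‖ ^ p) = fun _ => (1:ℝ) := by
    funext n; simp [y, hmax.1 (φ n)]
  rw [hx1, limsup_const] at E1
  -- limsup ‖y n‖^p = 1 - ‖x₀‖^p
  have hL : limsup (fun n => ‖y n‖ ^ p) atTop = 1 - ‖x₀‖ ^ p := by linarith
  -- second application of (m_p)
  have E2 := hmp (fun n => T (y n)) hwTy (T x₀)
  have hx2 : (fun n => ‖T (y n) + T x₀‖ ^ p) = fun n => ‖T (x (φ n))‖ ^ p := by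
    funext n; simp [y, map_sub]
  rw [hx2] at E2
  have htends : Tendsto (fun n => ‖T (x (φ n))‖ ^ p) atTop (𝓝 (‖T‖ ^ p)) :=
    (hmax.2.comp hφ.tendsto_atTop).rpow_const (Or.inr hp0.le)
  rw [htends.limsup_eq] at E2
  -- bound limsup ‖T (y n)‖^p
  have hybdd : ∀ n, ‖y n‖ ≤ 1 + ‖x₀‖ := fun n => by
    calc ‖y n‖ ≤ ‖x (φ n)‖ + ‖x₀‖ := norm_sub_le _ _
      _ = 1 + ‖x₀‖ := by rw [hmax.1 (φ n)]
  have hbdd1 : IsBoundedUnder (· ≤ ·) atTop (fun n => ‖y n‖ ^ p) :=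
    isBoundedUnder_of ⟨(1 + ‖x₀‖) ^ p, fun n =>
      Real.rpow_le_rpow (norm_nonneg _) (hybdd n) hp0.le⟩
  have hcobdd1 : IsCoboundedUnder (· ≤ ·) atTop (fun n => ‖y n‖ ^ p) :=
    IsBoundedUnder.isCoboundedUnder_le
      (isBoundedUnder_of ⟨0, fun n => Real.rpow_nonneg (norm_nonneg _) p⟩)
  have hmono : Monotone (fun t : ℝ => ‖T‖ ^ p * t) :=
    fun a b hab => mul_le_mul_of_nonneg_left hab (Real.rpow_nonneg (norm_nonneg _) p)
  have hconst : ‖T‖ ^ p * limsup (fun n => ‖y n‖ ^ p) atTop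
      = limsup (fun n => ‖T‖ ^ p * ‖y n‖ ^ p) atTop := by
    have := hmono.map_limsup_of_continuousAt (F := atTop) (fun n => ‖y n‖ ^ p)
      ((continuous_const.mul continuous_id).continuousAt) hbdd1 hcobdd1
    exact this
  have hle : limsup (fun n => ‖T (y n)‖ ^ p) atTop
      ≤ ‖T‖ ^ p * (1 - ‖x₀‖ ^ p) := by
    rw [← hL, hconst]
    refine limsup_le_limsup (Eventually.of_forall fun n => ?_)
      (IsBoundedUnder.isCoboundedUnder_le
        (isBoundedUnder_of ⟨0, fun n => Real.rpow_nonneg (norm_nonneg _) p⟩))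
      (isBoundedUnder_of ⟨‖T‖ ^ p * (1 + ‖x₀‖) ^ p, fun n => hmono
        (Real.rpow_le_rpow (norm_nonneg _) (hybdd n) hp0.le)⟩)
    calc ‖T (y n)‖ ^ p ≤ (‖T‖ * ‖y n‖) ^ p :=
          Real.rpow_le_rpow (norm_nonneg _) (T.le_opNorm _) hp0.le
      _ = ‖T‖ ^ p * ‖y n‖ ^ p := Real.mul_rpow (norm_nonneg _) (norm_nonneg _)
  -- conclude ‖T x₀‖ = ‖T‖ * ‖x₀‖
  have key : (‖T‖ * ‖x₀‖) ^ p ≤ ‖T x₀‖ ^ p := by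
    rw [Real.mul_rpow (norm_nonneg _) (norm_nonneg _)]
    nlinarith [E2, hle]
  have hkey : ‖T‖ * ‖x₀‖ ≤ ‖T x₀‖ :=
    (Real.rpow_le_rpow_iff (mul_nonneg (norm_nonneg _) (norm_nonneg _))
      (norm_nonneg _) hp0).mp key
  have heq : ‖T x₀‖ = ‖T‖ * ‖x₀‖ := le_antisymm (T.le_opNorm _) hkey
  refine ⟨‖x₀‖⁻¹ • x₀, ?_, ?_⟩
  · rw [norm_smul, norm_inv, norm_norm, inv_mul_cancel₀ (norm_ne_zero_iff.mpr h0)]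
  · rw [map_smul, norm_smul, norm_inv, norm_norm, heq]
    field_simp [norm_ne_zero_iff.mpr h0]

lemma one_mem_of_attains {T : X →L[ℝ] X} {x : X} (hx : ‖x‖ = 1) (hTx : ‖T x‖ = ‖T‖) :
    (1:ℝ) ∈ {r : ℝ | ∃ x₀ : X, WeakClusterPtOfMaximizing T x₀ ∧ r = ‖x₀‖} := by
  refine ⟨x, ⟨fun _ => x, ⟨fun _ => hx, by simp [hTx]⟩,
    id, strictMono_id, fun f => ?_⟩, hx.symm⟩
  simp [Function.comp]

end Aux

theorem stmt4 {X : Type*} [NormedAddCommGroup X] [NormedSpace ℝ X] [CompleteSpace X]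
    (hrefl : Function.Surjective (NormedSpace.inclusionInDoubleDual ℝ X))
    {p : ℝ} (hp : 1 < p) (hmp : PropertyMp (X := X) p)
    (T : X →L[ℝ] X) :
    (betaT T > 0 → betaT T = 1) ∧
      (betaT T = 1 ↔ ∃ x : X, ‖x‖ = 1 ∧ ‖T x‖ = ‖T‖) := by
  set S := {r : ℝ | ∃ x₀ : X, WeakClusterPtOfMaximizing T x₀ ∧ r = ‖x₀‖} with hS
  have hub : ∀ r ∈ S, r ≤ 1 := by
    rintro r ⟨x₀, hx₀, rfl⟩
    exact norm_le_one_of_wcp hx₀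
  have hattains_of_pos : betaT T > 0 → ∃ x : X, ‖x‖ = 1 ∧ ‖T x‖ = ‖T‖ := by
    intro hpos
    by_contra hno
    have : ∀ r ∈ S, r ≤ 0 := by
      rintro r ⟨x₀, hx₀, rfl⟩
      by_contra hr
      push_neg at hr
      exact hno (attains_of_wcp_ne_zero hp hmp hx₀ (norm_pos_iff.mp hr))
    have : betaT T ≤ 0 := Real.sSup_le this le_rfl
    linarith
  have hbeta_of_attains : (∃ x : X, ‖x‖ = 1 ∧ ‖T x‖ = ‖T‖) → betaT T = 1 := by
    rintro ⟨x, hx, hTx⟩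
    have h1 : (1:ℝ) ∈ S := one_mem_of_attains hx hTx
    exact le_antisymm (Real.sSup_le hub zero_le_one) (le_csSup ⟨1, hub⟩ h1)
  refine ⟨fun hpos => hbeta_of_attains (hattains_of_pos hpos), ?_, hbeta_of_attains⟩
  intro h1
  exact hattains_of_pos (by rw [h1]; exact zero_lt_one)
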